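/- For any quandle X, the kernel of the natural surjection ψ_X : As(X) → Inn(X) is contained in the center of As(X). -/

import Mathlib

/-- A quandle in the convention of the paper. -/
class PQuandle (X : Type*) where
  op : X → X → X
  op_self : ∀ a : X, op a a = a
  op_bij : ∀ a : X, Function.Bijective (fun x => op x a)
  op_distrib : ∀ a b c : X, op (op a b) c = op (op a c) (op b c)

infixl:65 " ◁ " => PQuandle.op

namespace PQuandle

variable {X : Type*} [PQuandle X]

/-- The `n`-fold right operation `x ◁ⁿ y`. -/
def opn (x : X) (n : ℕ) (y : X) : X := (fun z => z ◁ y)^[n] x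

/-- The right translation `(· ◁ y)` as a permutation of `X`. -/
noncomputable def act (y : X) : Equiv.Perm X := Equiv.ofBijective _ (op_bij y)

@[simp] lemma act_apply (y x : X) : act y x = x ◁ y := rfl

/-- The inner automorphism group `Inn(X)`. -/
noncomputable def Inn (X : Type*) [PQuandle X] : Subgroup (Equiv.Perm X) :=
  Subgroup.closure (Set.range (act (X := X)))

/-- The relators `e_{x ◁ y}⁻¹ e_y⁻¹ e_x e_y` of the adjoint group. -/
def adjRels (X : Type*) [PQuandle X] : Set (FreeGroup X) :=
  { r | ∃ x y : X,
      r = (FreeGroup.of (x ◁ y))⁻¹ * (FreeGroup.of y)⁻¹ * FreeGroup.of x * FreeGroup.of y }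

/-- The adjoint (enveloping) group `As(X)` of the quandle `X`. -/
def Adj (X : Type*) [PQuandle X] : Type _ := PresentedGroup (adjRels X)

instance : Group (Adj X) := by unfold Adj; infer_instance

/-- The generator `e_x` of `As(X)`. -/
def gen (x : X) : Adj X := PresentedGroup.of x

lemma gen_rel (x y : X) : gen (x ◁ y) = (gen y)⁻¹ * gen x * gen y := by
  have h : ((FreeGroup.of (x ◁ y))⁻¹ * (FreeGroup.of y)⁻¹ * FreeGroup.of x * FreeGroup.of y :
      FreeGroup X) ∈ Subgroup.normalClosure (adjRels X) :=
    Subgroup.subset_normalClosure ⟨x, y, rfl⟩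
  have h2 : ((gen (x ◁ y))⁻¹ * (gen y)⁻¹ * gen x * gen y : Adj X) = 1 := by
    have := (QuotientGroup.eq_one_iff
      (((FreeGroup.of (x ◁ y))⁻¹ * (FreeGroup.of y)⁻¹ * FreeGroup.of x * FreeGroup.of y :
        FreeGroup X))).mpr h
    exact this
  calc gen (x ◁ y)
      = gen (x ◁ y) * ((gen (x ◁ y))⁻¹ * (gen y)⁻¹ * gen x * gen y) := by rw [h2, mul_one]
    _ = (gen y)⁻¹ * gen x * gen y := by group

lemma act_mul_act (x y : X) : act y * act x = act (x ◁ y) * act y := by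
  ext z
  simp only [Equiv.Perm.mul_apply, act_apply]
  exact op_distrib z x y

/-- The homomorphism `As(X) → Perm(X)` sending `e_y` to the inverse of the right
translation by `y`; it encodes the right action of `As(X)` on `X`. -/
noncomputable def innHom : Adj X →* Equiv.Perm X :=
  PresentedGroup.toGroup (f := fun y : X => (act y)⁻¹) (by
    rintro r ⟨x, y, rfl⟩
    simp only [map_mul, map_inv, FreeGroup.lift_apply_of, inv_inv]
    have := act_mul_act x y
    calc act (x ◁ y) * act y * (act x)⁻¹ * (act y)⁻¹
        = (act y * act x) * (act x)⁻¹ * (act y)⁻¹ := by rw [this]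
      _ = 1 := by group)

@[simp] lemma innHom_gen (y : X) : innHom (gen y) = (act y)⁻¹ :=
  PresentedGroup.toGroup.of _

/-- The right action of `As(X)` on `X`: `x · g`. -/
noncomputable def ract (x : X) (g : Adj X) : X := (innHom g)⁻¹ x

@[simp] lemma ract_gen (x y : X) : ract x (gen y) = x ◁ y := by
  simp [ract]

lemma ract_mul (x : X) (g h : Adj X) : ract x (g * h) = ract (ract x g) h := by
  simp [ract, map_mul]

/-- A quandle is connected if the right action of `As(X)` on `X` is transitive. -/
def Connected (X : Type*) [PQuandle X] : Prop :=
  ∀ x y : X, ∃ g : Adj X, ract x g = y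

/-- The homomorphism `ε : As(X) → ℤ` sending every generator `e_x` to `1`. -/
def eps : Adj X →* Multiplicative ℤ :=
  PresentedGroup.toGroup (f := fun _ : X => Multiplicative.ofAdd 1) (by
    rintro r ⟨x, y, rfl⟩
    simp only [map_mul, map_inv, FreeGroup.lift_apply_of]
    group)

@[simp] lemma eps_gen (x : X) : eps (gen x) = Multiplicative.ofAdd 1 :=
  PresentedGroup.toGroup.of _

/-- The underlying set of the universal covering quandle: `Ker ε`. -/
def covOp (a : X) (g h : (eps (X := X)).ker) : (eps (X := X)).ker :=
  ⟨(gen a)⁻¹ * g.1 * (h.1)⁻¹ * gen a * h.1, by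
    have hg : eps g.1 = 1 := g.2
    have hh : eps h.1 = 1 := h.2
    simp only [MonoidHom.mem_ker, map_mul, map_inv, hg, hh]
    group⟩

/-- `n`-fold covering operation. -/
def covOpn (a : X) (g : (eps (X := X)).ker) (n : ℕ) (h : (eps (X := X)).ker) :
    (eps (X := X)).ker := (fun u => covOp a u h)^[n] g

/-- The right translation of the covering quandle as a permutation. -/
def covAct (a : X) (h : (eps (X := X)).ker) : Equiv.Perm (eps (X := X)).ker where
  toFun g := covOp a g h
  invFun g := ⟨gen a * g.1 * (h.1)⁻¹ * (gen a)⁻¹ * h.1, by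
    have hg : eps g.1 = 1 := g.2
    have hh : eps h.1 = 1 := h.2
    simp only [MonoidHom.mem_ker, map_mul, map_inv, hg, hh]
    group⟩
  left_inv g := by
    apply Subtype.ext
    simp only [covOp]
    group
  right_inv g := by
    apply Subtype.ext
    simp only [covOp]
    group

end PQuandle

namespace PQuandle

variable {X : Type*} [PQuandle X]

@[simp] lemma ract_one (x : X) : ract x (1 : Adj X) = x := by
  simp [ract]

/-- The quotient map `FreeGroup X → Adj X`. -/
def toAdj (w : FreeGroup X) : Adj X := QuotientGroup.mk w

lemma gen_conj : ∀ g : Adj X, ∀ x : X, gen (ract x g) = g⁻¹ * gen x * g := by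
  have hmul : ∀ g h : Adj X, (∀ x : X, gen (ract x g) = g⁻¹ * gen x * g) →
      (∀ x : X, gen (ract x h) = h⁻¹ * gen x * h) →
      ∀ x : X, gen (ract x (g * h)) = (g * h)⁻¹ * gen x * (g * h) := by
    intro g h hgc hhc x
    rw [ract_mul, hhc, hgc]
    group
  have hinv : ∀ g : Adj X, (∀ x : X, gen (ract x g) = g⁻¹ * gen x * g) →
      ∀ x : X, gen (ract x g⁻¹) = (g⁻¹)⁻¹ * gen x * g⁻¹ := by
    intro g hgc x
    have h1 : ract (ract x g⁻¹) g = x := by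
      rw [← ract_mul, inv_mul_cancel, ract_one]
    have := hgc (ract x g⁻¹)
    rw [h1] at this
    rw [inv_inv]
    rw [this]; group
  intro g
  induction g using QuotientGroup.induction_on with
  | H w =>
    induction w using FreeGroup.induction_on with
    | C1 =>
      intro x
      show gen (ract x (1 : Adj X)) = (1 : Adj X)⁻¹ * gen x * 1
      simp
    | of y =>
      intro x
      show gen (ract x (gen y)) = (gen y)⁻¹ * gen x * gen y
      rw [ract_gen, gen_rel]
    | inv_of y ih =>
      show ∀ x : X, gen (ract x (gen y)⁻¹) = ((gen y)⁻¹)⁻¹ * gen x * (gen y)⁻¹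
      exact hinv (gen y) ih
    | mul v w ihv ihw =>
      show ∀ x : X, gen (ract x (toAdj v * toAdj w)) =
          (toAdj v * toAdj w)⁻¹ * gen x *
            (toAdj v * toAdj w)
      exact hmul _ _ ihv ihw

end PQuandle

open PQuandle in
/-- The kernel of the natural surjection `ψ_X : As(X) → Inn(X)`, i.e. the set of elements
acting trivially on `X`, is contained in the center of `As(X)`. -/
theorem stmt12 (X : Type*) [PQuandle X] (g : Adj X) (hg : ∀ x : X, ract x g = x) :
    g ∈ Subgroup.center (Adj X) := by
  rw [Subgroup.mem_center_iff]
  have key : ∀ x : X, gen x * g = g * gen x := by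
    intro x
    have := gen_conj g x
    rw [hg x] at this
    have h2 : g * gen x = gen x * g := by
      calc g * gen x = g * (g⁻¹ * gen x * g) := by rw [← this]
        _ = gen x * g := by group
    exact h2.symm
  -- every element commutes with g: induct
  intro h
  induction h using QuotientGroup.induction_on with
  | H w =>
    induction w using FreeGroup.induction_on with
    | C1 =>
      show (1 : Adj X) * g = g * 1
      rw [one_mul, mul_one]
    | of y => exact key y
    | inv_of y ih =>
      have ih' : gen y * g = g * gen y := ih
      show (gen y)⁻¹ * g = g * (gen y)⁻¹
      calc (gen y)⁻¹ * g = (gen y)⁻¹ * (g * gen y) * (gen y)⁻¹ := by group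
        _ = (gen y)⁻¹ * (gen y * g) * (gen y)⁻¹ := by rw [ih']
        _ = g * (gen y)⁻¹ := by group
    | mul v w ihv ihw =>
      show toAdj v * toAdj w * g =
          g * (toAdj v * toAdj w)
      have ihv' : toAdj v * g = g * toAdj v := ihv
      have ihw' : toAdj w * g = g * toAdj w := ihw
      rw [mul_assoc, ihw', ← mul_assoc, ihv', mul_assoc]
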